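/- Let ρ be a polymatroid on E and A ⊆ E. If B and B' are cyclic flats with ρ(A) = ρ(B) + Σ_{i ∈ A\B} ρ({i}) and ρ(A) = ρ(B') + Σ_{i ∈ A\B'} ρ({i}), then the cyclic flats cl_ρ(B ∪ B') and cy_ρ(B ∩ B') also satisfy this same minimizing equality for A. -/

import Mathlib

open Finset
open scoped Classical

variable {α : Type*}

def IsPolymatroid [DecidableEq α] (ρ : Finset α → ℝ) : Prop :=
  ρ ∅ = 0 ∧ (∀ A B : Finset α, A ⊆ B → ρ A ≤ ρ B) ∧
    (∀ A B : Finset α, ρ (A ∪ B) + ρ (A ∩ B) ≤ ρ A + ρ B)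

/-- `A` is a flat of the polymatroid `ρ` (ground set = all of `α`). -/
def PmFlat [DecidableEq α] (ρ : Finset α → ℝ) (A : Finset α) : Prop :=
  ∀ i : α, i ∉ A → ρ A < ρ (insert i A)

/-- `A` is a cyclic set of the polymatroid `ρ`. -/
def PmCyclic [DecidableEq α] (ρ : Finset α → ℝ) (A : Finset α) : Prop :=
  ∀ i ∈ A, 0 < ρ {i} → ρ A < ρ (A.erase i) + ρ {i}

/-- The closure of `A`: the set `{i : ρ(A ∪ {i}) = ρ(A)}`. -/
noncomputable def pmCl [DecidableEq α] [Fintype α] (ρ : Finset α → ℝ) (A : Finset α) :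
    Finset α :=
  Finset.univ.filter (fun i => ρ (insert i A) = ρ A)

/-- The maximum cyclic subset of `A`: the union of all cyclic subsets of `A`. -/
noncomputable def pmCy [DecidableEq α] (ρ : Finset α → ℝ) (A : Finset α) : Finset α :=
  (A.powerset.filter (fun D => PmCyclic ρ D)).sup id

section Aux

variable [DecidableEq α] {ρ : Finset α → ℝ} (hρ : IsPolymatroid ρ)
include hρ

lemma pm_nonneg (X : Finset α) : 0 ≤ ρ X := by
  have := hρ.2.1 ∅ X (empty_subset X); rw [hρ.1] at this; exact this

lemma pm_dimin {X Y : Finset α} (hXY : X ⊆ Y) {i : α} (hi : i ∉ Y) :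
    ρ (insert i Y) + ρ X ≤ ρ (insert i X) + ρ Y := by
  have h := hρ.2.2 (insert i X) Y
  have h1 : insert i X ∪ Y = insert i Y := by
    ext a; simp only [mem_union, mem_insert]
    constructor
    · rintro ((h | h) | h)
      · exact Or.inl h
      · exact Or.inr (hXY h)
      · exact Or.inr h
    · rintro (h | h)
      · exact Or.inl (Or.inl h)
      · exact Or.inr h
  have h2 : insert i X ∩ Y = X := by
    ext a; simp only [mem_inter, mem_insert]
    constructor
    · rintro ⟨h | h, hY⟩
      · exact absurd (h ▸ hY) hi
      · exact h
    · intro h; exact ⟨Or.inr h, hXY h⟩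
  rw [h1, h2] at h; linarith

lemma pm_insert_le (X : Finset α) (i : α) : ρ (insert i X) ≤ ρ X + ρ {i} := by
  have h := hρ.2.2 X {i}
  have h1 : X ∪ {i} = insert i X := by rw [union_comm]; rfl
  have h2 : 0 ≤ ρ (X ∩ {i}) := pm_nonneg hρ _
  rw [h1] at h; linarith

lemma pm_union_le (X S : Finset α) : ρ (X ∪ S) ≤ ρ X + ∑ i ∈ S, ρ {i} := by
  induction S using Finset.induction_on with
  | empty => simp
  | insert _ _ ha ih =>
    rename_i a S
    have h1 : X ∪ insert a S = insert a (X ∪ S) := union_insert a X S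
    rw [h1, Finset.sum_insert ha]
    have := pm_insert_le hρ (X ∪ S) a
    linarith

lemma pm_lower (A X : Finset α) : ρ A ≤ ρ X + ∑ i ∈ A \ X, ρ {i} := by
  have h1 : A ⊆ X ∪ (A \ X) := by
    intro a ha; by_cases h : a ∈ X <;> simp [h, ha]
  exact le_trans (hρ.2.1 _ _ h1) (pm_union_le hρ X (A \ X))

-- membership in closure
omit hρ in
lemma mem_pmCl [Fintype α] {X : Finset α} {i : α} :
    i ∈ pmCl ρ X ↔ ρ (insert i X) = ρ X := by simp [pmCl]

omit hρ in
lemma subset_pmCl [Fintype α] (X : Finset α) : X ⊆ pmCl ρ X := by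
  intro i hi; rw [mem_pmCl, insert_eq_self.2 hi]

lemma pm_rank_pmCl [Fintype α] (X : Finset α) : ρ (pmCl ρ X) = ρ X := by
  have key : ∀ S : Finset α, (∀ i ∈ S, ρ (insert i X) = ρ X) → ρ (X ∪ S) = ρ X := by
    intro S
    induction S using Finset.induction_on with
    | empty => simp
    | insert _ _ ha ih =>
      rename_i a S
      intro h
      have hS := ih (fun i hi => h i (mem_insert_of_mem hi))
      have h1 : X ∪ insert a S = insert a (X ∪ S) := union_insert a X S
      rw [h1]
      by_cases haX : a ∈ X ∪ S
      · rw [insert_eq_self.2 haX, hS]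
      · have hd := pm_dimin hρ (subset_union_left (s₁ := X) (s₂ := S)) haX
        rw [h a (mem_insert_self a S)] at hd
        have hle : ρ (insert a (X ∪ S)) ≤ ρ X := by linarith
        have hge : ρ X ≤ ρ (insert a (X ∪ S)) :=
          hρ.2.1 _ _ (subset_trans subset_union_left (subset_insert a _))
        linarith
  have h2 : X ∪ pmCl ρ X = pmCl ρ X := union_eq_right.2 (subset_pmCl X)
  rw [← h2]
  exact key _ (fun i hi => mem_pmCl.1 hi)

lemma pmCl_flat [Fintype α] (X : Finset α) : PmFlat ρ (pmCl ρ X) := by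
  intro i hi
  rw [mem_pmCl] at hi
  have h1 : ρ X ≤ ρ (insert i X) := hρ.2.1 _ _ (subset_insert i X)
  have h2 : ρ X < ρ (insert i X) := lt_of_le_of_ne h1 (Ne.symm hi)
  have h3 : ρ (insert i X) ≤ ρ (insert i (pmCl ρ X)) :=
    hρ.2.1 _ _ (insert_subset_insert i (subset_pmCl X))
  rw [pm_rank_pmCl hρ]; linarith

-- key marginal lemma
lemma pm_marg {D Z : Finset α} (hD : PmCyclic ρ D) {i : α} (hiD : i ∈ D)
    (hpos : 0 < ρ {i}) (hDZ : D ⊆ Z) : ρ Z < ρ (Z.erase i) + ρ {i} := by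
  have hiZ : i ∈ Z := hDZ hiD
  have hXY : D.erase i ⊆ Z.erase i := erase_subset_erase i hDZ
  have hiY : i ∉ Z.erase i := notMem_erase i Z
  have hd := pm_dimin hρ hXY hiY
  rw [insert_erase hiZ, insert_erase hiD] at hd
  have := hD i hiD hpos
  linarith

lemma pm_union_cyclic {D D' : Finset α} (hD : PmCyclic ρ D) (hD' : PmCyclic ρ D') :
    PmCyclic ρ (D ∪ D') := by
  intro i hi hpos
  rcases mem_union.1 hi with h | h
  · exact pm_marg hρ hD h hpos subset_union_left
  · exact pm_marg hρ hD' h hpos subset_union_right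

lemma pmCl_cyclic [Fintype α] {D : Finset α} (hD : PmCyclic ρ D) :
    PmCyclic ρ (pmCl ρ D) := by
  intro i hi hpos
  by_cases hiD : i ∈ D
  · exact pm_marg hρ hD hiD hpos (subset_pmCl D)
  · have heq : ρ (insert i D) = ρ D := mem_pmCl.1 hi
    have hXY : D ⊆ (pmCl ρ D).erase i := by
      intro a ha; exact mem_erase.2 ⟨fun h => hiD (h ▸ ha), subset_pmCl D ha⟩
    have hd := pm_dimin hρ hXY (notMem_erase i _)
    rw [insert_erase hi] at hd
    have hD2 : ρ (insert i D) = ρ D := heq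
    rw [hD2] at hd
    linarith

-- pmCy basics
omit hρ in
lemma pmCy_subset (X : Finset α) : pmCy ρ X ⊆ X := by
  intro a ha
  obtain ⟨D, hD, haD⟩ := Finset.mem_sup.1 ha
  exact mem_powerset.1 (mem_filter.1 hD).1 haD

lemma pmCy_cyclic (X : Finset α) : PmCyclic ρ (pmCy ρ X) := by
  apply Finset.sup_induction
  · intro i hi; exact absurd hi (notMem_empty i)
  · intro a ha b hb; exact pm_union_cyclic hρ ha hb
  · intro D hD; exact (mem_filter.1 hD).2

omit hρ in
lemma subset_pmCy {D X : Finset α} (hDX : D ⊆ X) (hD : PmCyclic ρ D) :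
    D ⊆ pmCy ρ X :=
  Finset.le_sup (f := id) (mem_filter.2 ⟨mem_powerset.2 hDX, hD⟩)

lemma pm_decomp (X : Finset α) :
    ρ X = ρ (pmCy ρ X) + ∑ i ∈ X \ pmCy ρ X, ρ {i} := by
  induction X using Finset.strongInduction with
  | _ X ih =>
    by_cases hc : PmCyclic ρ X
    · have h1 : pmCy ρ X = X :=
        subset_antisymm (pmCy_subset X) (subset_pmCy (Finset.Subset.refl X) hc)
      rw [h1, sdiff_self]; simp
    · have : ∃ i ∈ X, 0 < ρ {i} ∧ ρ (X.erase i) + ρ {i} ≤ ρ X := by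
        simp only [PmCyclic, not_forall, not_lt] at hc
        obtain ⟨i, hi, hpos, hle⟩ := hc
        exact ⟨i, hi, hpos, hle⟩
      obtain ⟨i, hiX, hpos, hle⟩ := this
      have hub : ρ X ≤ ρ (X.erase i) + ρ {i} := by
        have := pm_insert_le hρ (X.erase i) i
        rw [insert_erase hiX] at this; exact this
      have heq : ρ X = ρ (X.erase i) + ρ {i} := le_antisymm hub hle
      have hnot : ∀ D : Finset α, D ⊆ X → PmCyclic ρ D → i ∉ D := by
        intro D hDX hD hiD
        have := pm_marg hρ hD hiD hpos hDX
        linarith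
      have hcyeq : pmCy ρ X = pmCy ρ (X.erase i) := by
        unfold pmCy
        congr 1
        ext D
        simp only [mem_filter, mem_powerset]
        constructor
        · rintro ⟨hDX, hD⟩
          exact ⟨(subset_erase).2 ⟨hDX, hnot D hDX hD⟩, hD⟩
        · rintro ⟨hDX, hD⟩
          exact ⟨hDX.trans (erase_subset i X), hD⟩
      have hih := ih (X.erase i) (erase_ssubset hiX)
      have hicy : i ∉ pmCy ρ X := hnot _ (pmCy_subset X) (pmCy_cyclic hρ X)
      have hset : X \ pmCy ρ X = insert i (X.erase i \ pmCy ρ X) := by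
        ext a
        simp only [mem_sdiff, mem_insert, mem_erase]
        constructor
        · rintro ⟨haX, hacy⟩
          by_cases h : a = i
          · exact Or.inl h
          · exact Or.inr ⟨⟨h, haX⟩, hacy⟩
        · rintro (h | ⟨⟨_, haX⟩, hacy⟩)
          · exact ⟨h ▸ hiX, h ▸ hicy⟩
          · exact ⟨haX, hacy⟩
      have hinot : i ∉ X.erase i \ pmCy ρ X := by
        simp [mem_sdiff]
      rw [hset, Finset.sum_insert hinot, hcyeq, heq, hih]
      ring

lemma pm_inter_flat {F F' : Finset α} (hF : PmFlat ρ F) (hF' : PmFlat ρ F') :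
    PmFlat ρ (F ∩ F') := by
  intro i hi
  have hi' : i ∉ F ∨ i ∉ F' := by
    by_contra h; push_neg at h; exact hi (mem_inter.2 ⟨h.1, h.2⟩)
  rcases hi' with h | h
  · have hd := pm_dimin hρ (inter_subset_left (s₁ := F) (s₂ := F')) h
    have := hF i h; linarith
  · have hd := pm_dimin hρ (inter_subset_right (s₁ := F) (s₂ := F')) h
    have := hF' i h; linarith

lemma pmCy_flat {F : Finset α} (hF : PmFlat ρ F) : PmFlat ρ (pmCy ρ F) := by
  intro i hi
  by_cases hiF : i ∈ F
  · -- show by contradiction: insert i (pmCy ρ F) would be cyclic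
    by_contra hcon
    push_neg at hcon
    have hle : ρ (insert i (pmCy ρ F)) = ρ (pmCy ρ F) :=
      le_antisymm hcon (hρ.2.1 _ _ (subset_insert i _))
    have hcyc : PmCyclic ρ (insert i (pmCy ρ F)) := by
      intro j hj hjpos
      rcases mem_insert.1 hj with h | h
      · subst h
        rw [erase_insert hi, hle]
        linarith
      · exact pm_marg hρ (pmCy_cyclic hρ F) h hjpos (subset_insert i _)
    have hsub : insert i (pmCy ρ F) ⊆ F := insert_subset hiF (pmCy_subset F)
    have := subset_pmCy hsub hcyc (mem_insert_self i _)
    exact hi this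
  · have hd := pm_dimin hρ (pmCy_subset (ρ := ρ) F) hiF
    have := hF i hiF; linarith

end Aux

theorem join_meet_mem_R [DecidableEq α] [Fintype α]
    (ρ : Finset α → ℝ) (hρ : IsPolymatroid ρ) (A : Finset α) {B B' : Finset α}
    (hBflat : PmFlat ρ B) (hBcyc : PmCyclic ρ B)
    (hB'flat : PmFlat ρ B') (hB'cyc : PmCyclic ρ B')
    (hBeq : ρ A = ρ B + ∑ i ∈ A \ B, ρ {i})
    (hB'eq : ρ A = ρ B' + ∑ i ∈ A \ B', ρ {i}) :
    (PmFlat ρ (pmCl ρ (B ∪ B')) ∧ PmCyclic ρ (pmCl ρ (B ∪ B')) ∧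
      ρ A = ρ (pmCl ρ (B ∪ B')) + ∑ i ∈ A \ pmCl ρ (B ∪ B'), ρ {i}) ∧
    (PmFlat ρ (pmCy ρ (B ∩ B')) ∧ PmCyclic ρ (pmCy ρ (B ∩ B')) ∧
      ρ A = ρ (pmCy ρ (B ∩ B')) + ∑ i ∈ A \ pmCy ρ (B ∩ B'), ρ {i}) := by
  set U := B ∪ B' with hUdef
  set G := B ∩ B' with hGdef
  -- modularity of the sum term
  have hsum : (∑ i ∈ A \ B, ρ {i}) + (∑ i ∈ A \ B', ρ {i})
      = (∑ i ∈ A \ G, ρ {i}) + (∑ i ∈ A \ U, ρ {i}) := by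
    have h1 : (A \ B) ∪ (A \ B') = A \ G := by
      ext a; simp [hGdef, mem_union, mem_sdiff, mem_inter]; tauto
    have h2 : (A \ B) ∩ (A \ B') = A \ U := by
      ext a; simp [hUdef, mem_inter, mem_sdiff, mem_union]; tauto
    rw [← h1, ← h2, Finset.sum_union_inter]
  have hmod := hρ.2.2 B B'
  have hUlow := pm_lower hρ A U
  have hGlow := pm_lower hρ A G
  have hUeq : ρ A = ρ U + ∑ i ∈ A \ U, ρ {i} := by linarith
  have hGeq : ρ A = ρ G + ∑ i ∈ A \ G, ρ {i} := by linarith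
  constructor
  · refine ⟨pmCl_flat hρ U, pmCl_cyclic hρ (pm_union_cyclic hρ hBcyc hB'cyc), ?_⟩
    have h1 : ρ (pmCl ρ U) = ρ U := pm_rank_pmCl hρ U
    have h2 : ∑ i ∈ A \ pmCl ρ U, ρ {i} ≤ ∑ i ∈ A \ U, ρ {i} := by
      apply Finset.sum_le_sum_of_subset_of_nonneg
      · exact sdiff_subset_sdiff (Finset.Subset.refl A) (subset_pmCl U)
      · intro i _ _; exact pm_nonneg hρ _
    have h3 := pm_lower hρ A (pmCl ρ U)
    linarith
  · refine ⟨pmCy_flat hρ (pm_inter_flat hρ hBflat hB'flat), pmCy_cyclic hρ G, ?_⟩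
    have hdec := pm_decomp hρ G
    have h2 : ∑ i ∈ A \ pmCy ρ G, ρ {i}
        ≤ (∑ i ∈ A \ G, ρ {i}) + ∑ i ∈ G \ pmCy ρ G, ρ {i} := by
      rw [← Finset.sum_union (by
        rw [Finset.disjoint_left]
        intro a ha hb
        exact (mem_sdiff.1 ha).2 (mem_sdiff.1 hb).1)]
      apply Finset.sum_le_sum_of_subset_of_nonneg
      · intro a ha
        rcases mem_sdiff.1 ha with ⟨haA, hacy⟩
        by_cases h : a ∈ G
        · exact mem_union_right _ (mem_sdiff.2 ⟨h, hacy⟩)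
        · exact mem_union_left _ (mem_sdiff.2 ⟨haA, h⟩)
      · intro i _ _; exact pm_nonneg hρ _
    have h3 := pm_lower hρ A (pmCy ρ G)
    linarith
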